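/- arXiv:1311.2661 — 2 statements merged into one kernel-verified Lean document; each statement's English description precedes it below -/
import Mathlib

section
/- Let (x*, u*) be any primal–dual optimal pair of the LP and define C_* := max(‖x* − x̄‖, ‖u* − ū‖). Then the unique solution x(β) of the regularized quadratic penalty problem satisfies ‖A x(β) − b‖ ≤ β^{-1}[‖u* − ū‖ + √(‖u* − ū‖² + ‖x* − x̄‖²)] ≤ β^{-1}(1+√2) C_*, and ‖x(β) − x̄‖ ≤ [2‖u* − ū‖(‖u* − ū‖ + √(‖u* − ū‖² + ‖x* − x̄‖²)) + ‖x* − x̄‖²]^{1/2} ≤ √6 C_*. -/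
open Matrix Finset MeasureTheory ProbabilityTheory

/-- Euclidean norm of a finitely-indexed real vector. -/
noncomputable def l2norm {ι : Type*} [Fintype ι] (x : ι → ℝ) : ℝ :=
  Real.sqrt (∑ i, (x i) ^ 2)

/-- Frobenius norm of a real matrix. -/
noncomputable def frobNorm {ι κ : Type*} [Fintype ι] [Fintype κ] (A : Matrix ι κ ℝ) : ℝ :=
  Real.sqrt (∑ i, ∑ j, (A i j) ^ 2)

/-- Euclidean inner product. -/
noncomputable def rdot {ι : Type*} [Fintype ι] (a b : ι → ℝ) : ℝ := ∑ i, a i * b i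

/-- The regularized quadratic penalty objective
`f_β(x) = cᵀx − ūᵀ(Ax−b) + (β/2)‖Ax−b‖² + (1/(2β))‖x−x̄‖²`. -/
noncomputable def fpen {ι κ : Type*} [Fintype ι] [Fintype κ]
    (A : Matrix ι κ ℝ) (b : ι → ℝ) (c : κ → ℝ) (ub : ι → ℝ) (xb : κ → ℝ)
    (β : ℝ) (x : κ → ℝ) : ℝ :=
  rdot c x - rdot ub (A.mulVec x - b) + (β / 2) * l2norm (A.mulVec x - b) ^ 2
    + (1 / (2 * β)) * l2norm (x - xb) ^ 2

lemma l2norm_nonneg' {ι : Type*} [Fintype ι] (x : ι → ℝ) : 0 ≤ l2norm x :=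
  Real.sqrt_nonneg _

lemma rdot_le' {ι : Type*} [Fintype ι] (a v : ι → ℝ) : rdot a v ≤ l2norm a * l2norm v :=
  Real.sum_mul_le_sqrt_mul_sqrt _ _ _

lemma neg_rdot_le' {ι : Type*} [Fintype ι] (a v : ι → ℝ) :
    -(l2norm a * l2norm v) ≤ rdot a v := by
  have h := rdot_le' (-a) v
  have h1 : rdot (-a) v = -rdot a v := by simp [rdot]
  have h2 : l2norm (-a) = l2norm a := by simp [l2norm]
  rw [h1, h2] at h
  linarith

lemma rdot_swap' {m n : ℕ} (A : Matrix (Fin m) (Fin n) ℝ) (u : Fin m → ℝ) (x : Fin n → ℝ) :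
    rdot (Aᵀ.mulVec u) x = rdot u (A.mulVec x) := by
  simp only [rdot, Matrix.mulVec, dotProduct, Matrix.transpose_apply, Finset.sum_mul,
    Finset.mul_sum]
  rw [Finset.sum_comm]
  exact Finset.sum_congr rfl fun i _ => Finset.sum_congr rfl fun j _ => by ring

/-- Core algebraic estimates. -/
lemma qp_alg (β ρ d U X Cs : ℝ) (hβ : 0 < β) (hρ0 : 0 ≤ ρ) (hd0 : 0 ≤ d)
    (hU0 : 0 ≤ U) (hX0 : 0 ≤ X) (hUC : U ≤ Cs) (hXC : X ≤ Cs)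
    (hkey : β ^ 2 * ρ ^ 2 - 2 * β * U * ρ + d ^ 2 ≤ X ^ 2) :
    ρ ≤ β⁻¹ * (U + Real.sqrt (U ^ 2 + X ^ 2)) ∧
    β⁻¹ * (U + Real.sqrt (U ^ 2 + X ^ 2)) ≤ β⁻¹ * (1 + Real.sqrt 2) * Cs ∧
    d ≤ Real.sqrt (2 * U * (U + Real.sqrt (U ^ 2 + X ^ 2)) + X ^ 2) ∧
    Real.sqrt (2 * U * (U + Real.sqrt (U ^ 2 + X ^ 2)) + X ^ 2) ≤ Real.sqrt 6 * Cs := by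
  set S := Real.sqrt (U ^ 2 + X ^ 2) with hS
  have hS0 : 0 ≤ S := Real.sqrt_nonneg _
  have hS2 : S ^ 2 = U ^ 2 + X ^ 2 := Real.sq_sqrt (by positivity)
  have hC0 : 0 ≤ Cs := le_trans hU0 hUC
  have h1 : (β * ρ - U) ^ 2 ≤ S ^ 2 := by nlinarith [sq_nonneg d]
  have hres : β * ρ ≤ U + S := by nlinarith [h1, hS0]
  have hb1 : ρ ≤ β⁻¹ * (U + S) := by
    rw [inv_mul_eq_div]
    rw [le_div_iff₀ hβ]
    linarith [mul_comm ρ β]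
  have hs2 : Real.sqrt 2 ≤ 3 / 2 := by
    rw [show (3:ℝ)/2 = Real.sqrt ((3/2)^2) from (Real.sqrt_sq (by norm_num)).symm]
    apply Real.sqrt_le_sqrt; norm_num
  have hs2' : (0:ℝ) ≤ Real.sqrt 2 := Real.sqrt_nonneg _
  have hSC : S ≤ Real.sqrt 2 * Cs := by
    rw [hS, show Real.sqrt 2 * Cs = Real.sqrt (2 * Cs ^ 2) by
      rw [Real.sqrt_mul (by norm_num), Real.sqrt_sq hC0]]
    apply Real.sqrt_le_sqrt
    nlinarith
  have hb2 : β⁻¹ * (U + S) ≤ β⁻¹ * (1 + Real.sqrt 2) * Cs := by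
    have hβinv : (0:ℝ) ≤ β⁻¹ := by positivity
    have h : U + S ≤ (1 + Real.sqrt 2) * Cs := by nlinarith
    calc β⁻¹ * (U + S) ≤ β⁻¹ * ((1 + Real.sqrt 2) * Cs) :=
          mul_le_mul_of_nonneg_left h hβinv
      _ = β⁻¹ * (1 + Real.sqrt 2) * Cs := by ring
  have hd2 : d ^ 2 ≤ 2 * U * (U + S) + X ^ 2 := by
    nlinarith [mul_le_mul_of_nonneg_left hres hU0, sq_nonneg (β * ρ)]
  have hb3 : d ≤ Real.sqrt (2 * U * (U + S) + X ^ 2) := by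
    rw [show d = Real.sqrt (d ^ 2) from (Real.sqrt_sq hd0).symm]
    exact Real.sqrt_le_sqrt hd2
  have hb4 : Real.sqrt (2 * U * (U + S) + X ^ 2) ≤ Real.sqrt 6 * Cs := by
    rw [show Real.sqrt 6 * Cs = Real.sqrt (6 * Cs ^ 2) by
      rw [Real.sqrt_mul (by norm_num), Real.sqrt_sq hC0]]
    apply Real.sqrt_le_sqrt
    nlinarith
  exact ⟨hb1, hb2, hb3, hb4⟩

/-- explicit residual and distance bounds for the solution of the
regularized quadratic penalty problem (Lemma of the appendix). -/
theorem qp_penalty_residual_bounds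
    {m n : ℕ} (A : Matrix (Fin m) (Fin n) ℝ) (b : Fin m → ℝ) (c : Fin n → ℝ)
    (ub : Fin m → ℝ) (xb : Fin n → ℝ) (β : ℝ) (hβ : 0 < β)
    -- (x*, u*) : any primal–dual optimal pair
    (xs : Fin n → ℝ) (us : Fin m → ℝ)
    (hpfeas : A.mulVec xs = b) (hppos : ∀ j, 0 ≤ xs j)
    (hdfeas : ∀ j, 0 ≤ (c - Aᵀ.mulVec us) j)
    (hstrong : rdot c xs = rdot b us)
    (Cs : ℝ) (hCs : Cs = max (l2norm (xs - xb)) (l2norm (us - ub)))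
    -- x(β) : the minimizer of f_β over the nonnegative orthant
    (xβ : Fin n → ℝ) (hβnn : ∀ j, 0 ≤ xβ j)
    (hβmin : ∀ x : Fin n → ℝ, (∀ j, 0 ≤ x j) →
      fpen A b c ub xb β xβ ≤ fpen A b c ub xb β x) :
    l2norm (A.mulVec xβ - b) ≤
      β⁻¹ * (l2norm (us - ub)
        + Real.sqrt (l2norm (us - ub) ^ 2 + l2norm (xs - xb) ^ 2)) ∧
    β⁻¹ * (l2norm (us - ub)
        + Real.sqrt (l2norm (us - ub) ^ 2 + l2norm (xs - xb) ^ 2)) ≤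
      β⁻¹ * (1 + Real.sqrt 2) * Cs ∧
    l2norm (xβ - xb) ≤
      Real.sqrt (2 * l2norm (us - ub) * (l2norm (us - ub)
        + Real.sqrt (l2norm (us - ub) ^ 2 + l2norm (xs - xb) ^ 2))
        + l2norm (xs - xb) ^ 2) ∧
    Real.sqrt (2 * l2norm (us - ub) * (l2norm (us - ub)
        + Real.sqrt (l2norm (us - ub) ^ 2 + l2norm (xs - xb) ^ 2))
        + l2norm (xs - xb) ^ 2) ≤ Real.sqrt 6 * Cs := by
  have hUC : l2norm (us - ub) ≤ Cs := by rw [hCs]; exact le_max_right _ _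
  have hXC : l2norm (xs - xb) ≤ Cs := by rw [hCs]; exact le_max_left _ _
  -- value at x*
  have hz : A.mulVec xs - b = 0 := by rw [hpfeas]; simp
  have hfs : fpen A b c ub xb β xs
      = rdot c xs + (1 / (2 * β)) * l2norm (xs - xb) ^ 2 := by
    rw [fpen, hz]
    have hl0 : l2norm (0 : Fin m → ℝ) = 0 := by simp [l2norm]
    have hr0 : rdot ub (0 : Fin m → ℝ) = 0 := by simp [rdot]
    rw [hl0, hr0]
    ring
  have hmin := hβmin xs hppos
  rw [hfs] at hmin
  rw [fpen] at hmin
  -- duality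
  have hdual : rdot c xs + rdot us (A.mulVec xβ - b) ≤ rdot c xβ := by
    have h1 : 0 ≤ rdot (c - Aᵀ.mulVec us) xβ :=
      Finset.sum_nonneg fun j _ => mul_nonneg (hdfeas j) (hβnn j)
    have h2 : rdot (c - Aᵀ.mulVec us) xβ = rdot c xβ - rdot (Aᵀ.mulVec us) xβ := by
      simp [rdot, sub_mul, Finset.sum_sub_distrib]
    have h3 : rdot (Aᵀ.mulVec us) xβ = rdot us (A.mulVec xβ) := rdot_swap' A us xβ
    have h4 : rdot us (A.mulVec xβ - b) = rdot us (A.mulVec xβ) - rdot us b := by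
      simp [rdot, mul_sub, Finset.sum_sub_distrib]
    have h5 : rdot us b = rdot b us := by simp [rdot, mul_comm]
    rw [h2, h3] at h1
    rw [h4, h5, ← hstrong]
    linarith
  -- Cauchy–Schwarz
  have hcs : -(l2norm (us - ub) * l2norm (A.mulVec xβ - b))
      ≤ rdot (us - ub) (A.mulVec xβ - b) := neg_rdot_le' _ _
  have hsplit : rdot (us - ub) (A.mulVec xβ - b)
      = rdot us (A.mulVec xβ - b) - rdot ub (A.mulVec xβ - b) := by
    simp [rdot, sub_mul, Finset.sum_sub_distrib]
  rw [hsplit] at hcs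
  -- key inequality, fractional form
  have hkey : (β / 2) * l2norm (A.mulVec xβ - b) ^ 2
      - l2norm (us - ub) * l2norm (A.mulVec xβ - b)
      + (1 / (2 * β)) * l2norm (xβ - xb) ^ 2
      ≤ (1 / (2 * β)) * l2norm (xs - xb) ^ 2 := by linarith
  -- clear denominators
  have h2β : (0:ℝ) < 2 * β := by positivity
  have hkey2 : β ^ 2 * l2norm (A.mulVec xβ - b) ^ 2
      - 2 * β * l2norm (us - ub) * l2norm (A.mulVec xβ - b)
      + l2norm (xβ - xb) ^ 2 ≤ l2norm (xs - xb) ^ 2 := by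
    have e1 : (β / 2) * l2norm (A.mulVec xβ - b) ^ 2
        - l2norm (us - ub) * l2norm (A.mulVec xβ - b)
        + (1 / (2 * β)) * l2norm (xβ - xb) ^ 2
        = (β ^ 2 * l2norm (A.mulVec xβ - b) ^ 2
          - 2 * β * l2norm (us - ub) * l2norm (A.mulVec xβ - b)
          + l2norm (xβ - xb) ^ 2) / (2 * β) := by
      field_simp
    have e2 : (1 / (2 * β)) * l2norm (xs - xb) ^ 2 = l2norm (xs - xb) ^ 2 / (2 * β) := by
      ring
    rw [e1, e2] at hkey
    exact (div_le_div_iff_of_pos_right h2β).1 hkey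
  exact qp_alg β (l2norm (A.mulVec xβ - b)) (l2norm (xβ - xb)) (l2norm (us - ub))
    (l2norm (xs - xb)) Cs hβ (l2norm_nonneg' _) (l2norm_nonneg' _)
    (l2norm_nonneg' _) (l2norm_nonneg' _) hUC hXC hkey2
end

section
/- Let x(β) be the unique minimizer of f_β over the nonnegative orthant, and define the perturbed data b_β := A x(β) and c_β := c + (1/β)(x(β) − x̄). Then x(β) is an optimal solution of the perturbed linear program min c_β^T x subject to Ax = b_β, x ≥ 0, with corresponding dual optimal vector û := ū − β(A x(β) − b); that is, the pair (x(β), û) satisfies the KKT conditions: A x(β) = b_β, x(β) ≥ 0, c_β − A^T û ≥ 0, and x(β)^T (c_β − A^T û) = 0. -/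
open Matrix Finset MeasureTheory ProbabilityTheory

lemma l2norm_sq {ι : Type*} [Fintype ι] (x : ι → ℝ) : l2norm x ^ 2 = ∑ i, x i ^ 2 :=
  Real.sq_sqrt (Finset.sum_nonneg fun i _ => sq_nonneg _)

lemma sum_sq_expand {ι : Type*} [Fintype ι] (v w : ι → ℝ) (t : ℝ) :
    ∑ i, (v i + t * w i) ^ 2
      = ∑ i, v i ^ 2 + 2 * t * ∑ i, v i * w i + t ^ 2 * ∑ i, w i ^ 2 := by
  have h : ∀ i, (v i + t * w i) ^ 2
      = v i ^ 2 + 2 * t * (v i * w i) + t ^ 2 * w i ^ 2 := fun i => by ring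
  simp_rw [h, Finset.sum_add_distrib, Finset.mul_sum]

lemma sum_lin_expand {ι : Type*} [Fintype ι] (a v w : ι → ℝ) (t : ℝ) :
    ∑ i, a i * (v i + t * w i) = ∑ i, a i * v i + t * ∑ i, a i * w i := by
  have h : ∀ i, a i * (v i + t * w i) = a i * v i + t * (a i * w i) := fun i => by ring
  simp_rw [h, Finset.sum_add_distrib, Finset.mul_sum]

lemma fpen_single_expand {m n : ℕ} (A : Matrix (Fin m) (Fin n) ℝ) (b : Fin m → ℝ)
    (c : Fin n → ℝ) (ub : Fin m → ℝ) (xb : Fin n → ℝ) (β : ℝ)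
    (x : Fin n → ℝ) (j : Fin n) (t : ℝ) :
    fpen A b c ub xb β (x + t • (Pi.single j 1 : Fin n → ℝ))
      = fpen A b c ub xb β x
        + t * (c j - (∑ i, ub i * A i j) + β * (∑ i, (A.mulVec x - b) i * A i j)
              + (1 / β) * (x j - xb j))
        + t ^ 2 * ((β / 2) * (∑ i, (A i j) ^ 2) + 1 / (2 * β)) := by
  set e : Fin n → ℝ := Pi.single j 1 with he
  have hej : ∀ k, e k = if k = j then 1 else 0 := fun k => by
    simp [he, Pi.single_apply]
  have hcol : ∀ (a : Fin n → ℝ), ∑ k, a k * e k = a j := by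
    intro a
    simp_rw [hej, mul_ite, mul_one, mul_zero]
    simp
  have hesq : ∑ k, e k ^ 2 = 1 := by
    simp_rw [hej]
    simp
  have hAv : A.mulVec (x + t • e) = fun i => A.mulVec x i + t * A i j := by
    funext i
    simp only [mulVec, dotProduct, Pi.add_apply, Pi.smul_apply, smul_eq_mul]
    rw [sum_lin_expand (fun k => A i k) x e t, hcol (fun k => A i k)]
  simp only [fpen, rdot, hAv, l2norm_sq, Pi.sub_apply]
  have h1 : ∑ i, c i * (x + t • e) i = ∑ i, c i * x i + t * c j := by
    simp only [Pi.add_apply, Pi.smul_apply, smul_eq_mul]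
    rw [sum_lin_expand c x e t, hcol]
  have h2 : ∑ i, ub i * (A.mulVec x i + t * A i j - b i)
      = ∑ i, ub i * (A.mulVec x - b) i + t * ∑ i, ub i * A i j := by
    have : ∀ i, A.mulVec x i + t * A i j - b i = (A.mulVec x - b) i + t * A i j := by
      intro i; simp; ring
    simp_rw [this]
    exact sum_lin_expand ub _ _ t
  have h3 : ∑ i, (A.mulVec x i + t * A i j - b i) ^ 2
      = ∑ i, ((A.mulVec x - b) i) ^ 2 + 2 * t * ∑ i, (A.mulVec x - b) i * A i j
        + t ^ 2 * ∑ i, (A i j) ^ 2 := by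
    have : ∀ i, A.mulVec x i + t * A i j - b i = (A.mulVec x - b) i + t * A i j := by
      intro i; simp; ring
    simp_rw [this]
    exact sum_sq_expand _ _ t
  have h4 : ∑ k, ((x + t • e - xb) k) ^ 2
      = ∑ k, ((x - xb) k) ^ 2 + 2 * t * (x j - xb j) + t ^ 2 := by
    have : ∀ k, (x + t • e - xb) k = (x - xb) k + t * e k := by
      intro k; simp; ring
    simp_rw [this]
    rw [sum_sq_expand _ _ t, hcol (x - xb), hesq]
    simp
  simp only [Pi.sub_apply] at h2 h3 h4 ⊢
  rw [h1, h2, h3, h4]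
  ring


/-- the penalty minimizer `x(β)` solves the perturbed LP
`min c_βᵀx s.t. Ax = b_β, x ≥ 0` with dual vector `û = ū − β(Ax(β) − b)`;
i.e. the pair satisfies the KKT conditions. -/
theorem qp_penalty_solves_perturbed_lp
    {m n : ℕ} (A : Matrix (Fin m) (Fin n) ℝ) (b : Fin m → ℝ) (c : Fin n → ℝ)
    (ub : Fin m → ℝ) (xb : Fin n → ℝ) (β : ℝ) (hβ : 0 < β)
    -- x(β) : the minimizer of f_β over the nonnegative orthant
    (xβ : Fin n → ℝ) (hβnn : ∀ j, 0 ≤ xβ j)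
    (hβmin : ∀ x : Fin n → ℝ, (∀ j, 0 ≤ x j) →
      fpen A b c ub xb β xβ ≤ fpen A b c ub xb β x)
    -- the perturbed data and the candidate dual vector
    (bβ : Fin m → ℝ) (hbβ : bβ = A.mulVec xβ)
    (cβ : Fin n → ℝ) (hcβ : cβ = c + (1 / β) • (xβ - xb))
    (uh : Fin m → ℝ) (huh : uh = ub - β • (A.mulVec xβ - b)) :
    -- KKT conditions for the perturbed primal–dual pair
    A.mulVec xβ = bβ ∧
    (∀ j, 0 ≤ xβ j) ∧
    (∀ j, 0 ≤ (cβ - Aᵀ.mulVec uh) j) ∧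
    rdot xβ (cβ - Aᵀ.mulVec uh) = 0 ∧
    -- hence x(β) is optimal for the perturbed LP
    (∀ x : Fin n → ℝ, (∀ j, 0 ≤ x j) → A.mulVec x = bβ → rdot cβ xβ ≤ rdot cβ x) := by
  subst hbβ hcβ huh
  -- the "reduced cost" vector G and curvature Q
  set G : Fin n → ℝ := fun j =>
    c j - (∑ i, ub i * A i j) + β * (∑ i, (A.mulVec xβ - b) i * A i j)
      + (1 / β) * (xβ j - xb j) with hG
  set Q : Fin n → ℝ := fun j => (β / 2) * (∑ i, (A i j) ^ 2) + 1 / (2 * β) with hQ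
  have hQpos : ∀ j, 0 < Q j := by
    intro j
    have h1 : 0 ≤ (β / 2) * (∑ i, (A i j) ^ 2) :=
      mul_nonneg (by linarith) (Finset.sum_nonneg fun i _ => sq_nonneg _)
    have h2 : 0 < 1 / (2 * β) := by positivity
    simp only [hQ]; linarith
  -- the reduced cost of the perturbed LP equals G
  have hgeq : ∀ j, (c + (1 / β) • (xβ - xb) - Aᵀ.mulVec (ub - β • (A.mulVec xβ - b))) j
      = G j := by
    intro j
    have hAT : Aᵀ.mulVec (ub - β • (A.mulVec xβ - b)) j
        = ∑ i, A i j * (ub i - β * ((A.mulVec xβ) i - b i)) := rfl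
    have hsplit : ∑ i, A i j * (ub i - β * ((A.mulVec xβ) i - b i))
        = ∑ i, ub i * A i j - β * ∑ i, (A.mulVec xβ - b) i * A i j := by
      rw [Finset.mul_sum, ← Finset.sum_sub_distrib]
      refine Finset.sum_congr rfl fun i _ => ?_
      rw [Pi.sub_apply]; ring
    simp only [Pi.sub_apply, Pi.add_apply, Pi.smul_apply, smul_eq_mul]
    rw [hAT, hsplit]
    simp only [hG]
    ring
  -- basic variational inequality from minimality
  have hquad : ∀ (j : Fin n) (t : ℝ),
      (∀ k, 0 ≤ (xβ + t • (Pi.single j 1 : Fin n → ℝ)) k) →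
      0 ≤ t * G j + t ^ 2 * Q j := by
    intro j t ht
    have h := hβmin _ ht
    rw [fpen_single_expand] at h
    simp only [hG, hQ]
    linarith
  have hsingle : ∀ (j k : Fin n) (t : ℝ),
      (xβ + t • (Pi.single j 1 : Fin n → ℝ)) k
        = xβ k + t * (if k = j then 1 else 0) := by
    intro j k t; simp [Pi.single_apply]
  clear_value G Q
  clear hG hQ
  -- G ≥ 0
  have hGnn : ∀ j, 0 ≤ G j := by
    intro j
    by_contra hneg
    push_neg at hneg
    obtain ⟨t, htdef⟩ : ∃ t : ℝ, t = -G j / (2 * Q j) := ⟨_, rfl⟩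
    have htpos : 0 < t := by
      rw [htdef]; exact div_pos (by linarith) (by linarith [hQpos j])
    have hfeas : ∀ k, 0 ≤ (xβ + t • (Pi.single j 1 : Fin n → ℝ)) k := by
      intro k
      rw [hsingle]
      have : (0:ℝ) ≤ t * (if k = j then 1 else 0) := by
        split <;> simp <;> linarith
      linarith [hβnn k]
    have h := hquad j t hfeas
    have htQ : t * Q j = -G j / 2 := by
      rw [htdef, div_mul_eq_mul_div,
        div_eq_div_iff (by have := hQpos j; positivity) (two_ne_zero)]
      ring
    have hsq : t ^ 2 * Q j = -(t * G j) / 2 := by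
      rw [pow_two, mul_assoc, htQ]; ring
    have hneg2 : t * G j < 0 := mul_neg_of_pos_of_neg htpos hneg
    linarith
  -- complementarity: xβ j * G j = 0
  have hcomp : ∀ j, xβ j * G j = 0 := by
    intro j
    rcases eq_or_lt_of_le (hβnn j) with h | h
    · rw [← h, zero_mul]
    rcases eq_or_lt_of_le (hGnn j) with h' | h'
    · rw [← h', mul_zero]
    exfalso
    obtain ⟨s, hsdef⟩ : ∃ s : ℝ, s = min (xβ j) (G j / (2 * Q j)) := ⟨_, rfl⟩
    have hspos : 0 < s := hsdef ▸ lt_min h (div_pos h' (by linarith [hQpos j]))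
    have hs1 : s ≤ xβ j := hsdef ▸ min_le_left _ _
    have hs2 : s * (2 * Q j) ≤ G j := by
      rw [hsdef, ← le_div_iff₀ (by linarith [hQpos j])]
      exact min_le_right _ _
    have hfeas : ∀ k, 0 ≤ (xβ + (-s) • (Pi.single j 1 : Fin n → ℝ)) k := by
      intro k
      rw [hsingle]
      by_cases hk : k = j
      · subst hk; rw [if_pos rfl, mul_one]; linarith
      · rw [if_neg hk, mul_zero]; linarith [hβnn k]
    have hq := hquad j (-s) hfeas
    nlinarith [hq, mul_pos (mul_pos hspos hspos) (hQpos j),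
      mul_le_mul_of_nonneg_left hs2 hspos.le]
  refine ⟨rfl, hβnn, fun j => (hgeq j) ▸ hGnn j, ?_, ?_⟩
  · simp only [rdot]
    rw [Finset.sum_eq_zero]
    intro j _
    rw [hgeq j, hcomp j]
  · intro x hx hAx
    -- dual term identity
    have hdual : ∀ z : Fin n → ℝ,
        ∑ j, (Aᵀ.mulVec (ub - β • (A.mulVec xβ - b))) j * z j
          = ∑ i, (ub - β • (A.mulVec xβ - b)) i * (A.mulVec z) i := by
      intro z
      simp only [mulVec, dotProduct, transpose_apply, Finset.sum_mul, Finset.mul_sum]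
      rw [Finset.sum_comm]
      exact Finset.sum_congr rfl fun i _ => Finset.sum_congr rfl fun j _ => by ring
    have hsplit : ∀ z : Fin n → ℝ,
        rdot (c + (1 / β) • (xβ - xb)) z
          = ∑ j, G j * z j + ∑ i, (ub - β • (A.mulVec xβ - b)) i * (A.mulVec z) i := by
      intro z
      rw [← hdual z, ← Finset.sum_add_distrib]
      simp only [rdot]
      refine Finset.sum_congr rfl fun j _ => ?_
      rw [← hgeq j]
      simp only [Pi.sub_apply]
      ring
    rw [hsplit x, hsplit xβ, hAx]
    have h1 : ∑ j, G j * xβ j = 0 :=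
      Finset.sum_eq_zero fun j _ => by rw [mul_comm, hcomp j]
    have h2 : 0 ≤ ∑ j, G j * x j :=
      Finset.sum_nonneg fun j _ => mul_nonneg (hGnn j) (hx j)
    linarith
end
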